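/- Any localization S⁻¹R of a TAF-ring R at a multiplicative set S is again a TAF-ring. -/

import Mathlib

/-- An ideal is 2-absorbing if whenever a product of three elements lies in it,
the product of some two of them lies in it. -/
def IsTwoAbsorbing {R : Type*} [CommRing R] (I : Ideal R) : Prop :=
  ∀ a b c : R, a * b * c ∈ I → a * b ∈ I ∨ a * c ∈ I ∨ b * c ∈ I

/-- A TAF-ring: every proper ideal is a finite product of proper 2-absorbing ideals. -/
def IsTAFRing (R : Type*) [CommRing R] : Prop :=
  ∀ I : Ideal R, I ≠ ⊤ → ∃ (n : ℕ) (J : Fin n → Ideal R),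
    (∀ i, J i ≠ ⊤ ∧ IsTwoAbsorbing (J i)) ∧ I = ∏ i, J i

/-- If the comap of an ideal of a localization is 2-absorbing, so is the ideal itself. -/
lemma twoAbsorbing_of_comap {R : Type*} [CommRing R] (S : Submonoid R)
    (S' : Type*) [CommRing S'] [Algebra R S'] [IsLocalization S S']
    (I' : Ideal S') (hc : IsTwoAbsorbing (I'.comap (algebraMap R S'))) :
    IsTwoAbsorbing I' := by
  intro x y z hxyz
  obtain ⟨⟨a, s⟩, hx : IsLocalization.mk' S' a s = x⟩ := IsLocalization.mk'_surjective S x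
  obtain ⟨⟨b, t⟩, hy : IsLocalization.mk' S' b t = y⟩ := IsLocalization.mk'_surjective S y
  obtain ⟨⟨c, u⟩, hz : IsLocalization.mk' S' c u = z⟩ := IsLocalization.mk'_surjective S z
  have habc : a * b * c ∈ I'.comap (algebraMap R S') := by
    rw [Ideal.mem_comap]
    have : algebraMap R S' (a * b * c) = x * y * z * algebraMap R S' ((s : R) * t * u) := by
      rw [← hx, ← hy, ← hz]
      simp only [map_mul]
      rw [← IsLocalization.mk'_spec S' a s, ← IsLocalization.mk'_spec S' b t,
        ← IsLocalization.mk'_spec S' c u]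
      ring
    rw [this]
    exact Ideal.mul_mem_right _ _ hxyz
  have key : ∀ (p q : R) (v w : S), p * q ∈ I'.comap (algebraMap R S') →
      IsLocalization.mk' S' p v * IsLocalization.mk' S' q w ∈ I' := by
    intro p q v w hpq
    rw [← IsLocalization.mk'_mul, IsLocalization.mk'_eq_mul_mk'_one]
    exact Ideal.mul_mem_right _ _ (Ideal.mem_comap.mp hpq)
  rcases hc a b c habc with hab | hac | hbc
  · exact Or.inl (hx ▸ hy ▸ key a b s t hab)
  · exact Or.inr (Or.inl (hx ▸ hz ▸ key a c s u hac))
  · exact Or.inr (Or.inr (hy ▸ hz ▸ key b c t u hbc))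

/-- The map of a 2-absorbing ideal to a localization is 2-absorbing. -/
lemma twoAbsorbing_map {R : Type*} [CommRing R] (S : Submonoid R)
    (S' : Type*) [CommRing S'] [Algebra R S'] [IsLocalization S S']
    (J : Ideal R) (hJ : IsTwoAbsorbing J) :
    IsTwoAbsorbing (J.map (algebraMap R S')) := by
  apply twoAbsorbing_of_comap S
  intro a b c habc
  rw [Ideal.mem_comap, ← IsLocalization.mk'_one (M := S) S',
    IsLocalization.mk'_mem_map_algebraMap_iff S] at habc ⊢ <;> try infer_instance
  obtain ⟨w, hw, hwabc⟩ := habc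
  have : a * b * (c * w) ∈ J := by rw [show a * b * (c * w) = w * (a * b * c) by ring]; exact hwabc
  rcases hJ a b (c * w) this with h1 | h2 | h3
  · exact Or.inl ⟨1, S.one_mem, by rwa [one_mul]⟩
  · right; left
    rw [Ideal.mem_comap, ← IsLocalization.mk'_one (M := S) S',
      IsLocalization.mk'_mem_map_algebraMap_iff S]
    exact ⟨w, hw, by rw [show w * (a * c) = a * (c * w) by ring]; exact h2⟩
  · right; right
    rw [Ideal.mem_comap, ← IsLocalization.mk'_one (M := S) S',
      IsLocalization.mk'_mem_map_algebraMap_iff S]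
    exact ⟨w, hw, by rw [show w * (b * c) = b * (c * w) by ring]; exact h3⟩

theorem TAF_localization {R : Type*} [CommRing R] (S : Submonoid R)
    (S' : Type*) [CommRing S'] [Algebra R S'] [IsLocalization S S']
    (h : IsTAFRing R) : IsTAFRing S' := by
  intro I' hI'
  set f := algebraMap R S'
  have hcomap : I'.comap f ≠ ⊤ := fun ht => hI' (by
    rw [← IsLocalization.map_comap S S' I', Ideal.under_def, ← show f = algebraMap R S' from rfl, ht, Ideal.map_top])
  obtain ⟨n, J, hJ, hprod⟩ := h (I'.comap f) hcomap
  have hI'prod : I' = ∏ i, (J i).map f := by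
    rw [← IsLocalization.map_comap S S' I', Ideal.under_def, ← show f = algebraMap R S' from rfl, hprod]
    exact map_prod (Ideal.mapHom f) J Finset.univ
  -- keep only the proper factors
  classical
  set T : Finset (Fin n) := Finset.univ.filter (fun i => (J i).map f ≠ ⊤) with hT
  have hprodT : I' = ∏ i ∈ T, (J i).map f := by
    rw [hI'prod]
    refine (Finset.prod_subset (Finset.filter_subset _ _) ?_).symm
    intro i _ hi
    have : (J i).map f = ⊤ := by
      by_contra hne
      exact hi (Finset.mem_filter.mpr ⟨Finset.mem_univ i, hne⟩)
    rw [this, Ideal.one_eq_top]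
  refine ⟨T.card, fun k => (J (T.equivFin.symm k)).map f, ?_, ?_⟩
  · intro k
    have hk : ((T.equivFin.symm k : Fin n)) ∈ T := (T.equivFin.symm k).2
    exact ⟨(Finset.mem_filter.mp hk).2,
      twoAbsorbing_map S S' _ (hJ _).2⟩
  · rw [hprodT, ← Finset.prod_attach T (fun i => (J i).map f)]
    exact (Equiv.prod_comp T.equivFin.symm _).symm
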